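/- There is an absolute constant c > 0 with the following property. Let x_1, …, x_N be real numbers and let H ≥ 1. Suppose that ‖x_n‖ ≥ H^{−1} for every n with 1 ≤ n ≤ N. Then Σ_{1≤h≤H} | Σ_{n=1}^{N} e(h x_n) | ≥ cN. -/

import Mathlib

/-- `e(z) = e^{2πiz}`. -/
noncomputable def e (z : ℝ) : ℂ := Complex.exp (2 * Real.pi * Complex.I * z)

/-- `‖θ‖`, the distance from `θ` to the nearest integer. -/
noncomputable def nint (θ : ℝ) : ℝ := |θ - round θ|

lemma e_add (a b : ℝ) : e (a+b) = e a * e b := by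
  rw [e, e, e, ← Complex.exp_add]
  congr 1
  push_cast
  ring

lemma conj_e (a : ℝ) : (starRingEnd ℂ) (e a) = e (-a) := by
  rw [e, e, ← Complex.exp_conj]
  congr 1
  rw [map_mul, map_mul, map_mul, Complex.conj_I, Complex.conj_ofReal]
  rw [show ((starRingEnd ℂ) 2 : ℂ) = 2 from Complex.conj_ofNat 2,
    show ((starRingEnd ℂ) (a:ℂ) : ℂ) = (a:ℂ) from Complex.conj_ofReal a]
  push_cast
  ring

lemma e_zero : e 0 = 1 := by
  simp [e]

open Finset Real Complex in
lemma sum_cos_arith (K : ℕ) (hK : 1 ≤ K) (φ : ℝ) :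
    ∑ k ∈ Finset.Icc 1 K, Real.cos (2 * k * (Real.pi / (K+1)) + φ) = -Real.cos φ := by
  set A : ℝ := Real.pi / (K+1) with hA
  have hKR : (0:ℝ) < (K:ℝ) + 1 := by positivity
  have hApos : 0 < A := by positivity
  have hAle : A ≤ π / 2 := by
    rw [hA, div_le_div_iff₀ hKR two_pos]
    nlinarith [Real.pi_pos, (by exact_mod_cast hK : (1:ℝ) ≤ (K:ℝ))]
  set ω : ℂ := Complex.exp ((2*A : ℝ) * Complex.I) with hω
  have hω1 : ω ≠ 1 := by
    rw [hω, Ne, Complex.exp_eq_one_iff]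
    rintro ⟨n, hn⟩
    have h3 : (2*A : ℝ) = (n : ℝ) * (2 * Real.pi) := by
      have := congrArg Complex.im hn
      simpa using this
    have hpi := Real.pi_pos
    rcases le_or_gt (n:ℝ) 0 with h | h
    · nlinarith
    · have : (1:ℝ) ≤ (n:ℝ) := by exact_mod_cast h
      nlinarith
  have hωK : ω ^ (K+1) = 1 := by
    rw [hω, ← Complex.exp_nat_mul]
    have h0 : ((K:ℝ)+1) * (2*A) = 2 * Real.pi := by
      rw [hA]; field_simp
    have h1 : ((K+1:ℕ):ℂ) * (((2*A : ℝ):ℂ) * Complex.I)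
        = ((((K:ℝ)+1) * (2*A) : ℝ):ℂ) * Complex.I := by push_cast; ring
    rw [h1, h0]
    rw [show ((2 * Real.pi : ℝ):ℂ) * Complex.I = 2 * (Real.pi:ℂ) * Complex.I by push_cast; ring]
    exact Complex.exp_two_pi_mul_I
  have hgeom : ∑ k ∈ Finset.range (K+1), ω ^ k = 0 := by
    rw [geom_sum_eq hω1, hωK]
    simp
  have hIcc : ∑ k ∈ Finset.Icc 1 K, ω ^ k = -1 := by
    have hset : Finset.range (K+1) = insert 0 (Finset.Icc 1 K) := by
      ext x; simp; omega
    rw [hset, Finset.sum_insert (by simp)] at hgeom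
    simp only [pow_zero] at hgeom
    linear_combination hgeom
  have hterm : ∀ k : ℕ, Real.cos (2 * k * A + φ) =
      (Complex.exp ((φ:ℂ) * Complex.I) * ω ^ k).re := by
    intro k
    rw [hω, ← Complex.exp_nat_mul, ← Complex.exp_add]
    have : (φ:ℂ) * Complex.I + (k:ℂ) * (((2*A:ℝ):ℂ) * Complex.I)
        = ((2 * k * A + φ : ℝ) : ℂ) * Complex.I := by
      push_cast; ring
    rw [this, Complex.exp_ofReal_mul_I_re]
  calc ∑ k ∈ Finset.Icc 1 K, Real.cos (2 * k * A + φ)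
      = (∑ k ∈ Finset.Icc 1 K, Complex.exp ((φ:ℂ) * Complex.I) * ω ^ k).re := by
        rw [Complex.re_sum]; exact Finset.sum_congr rfl fun k _ => hterm k
    _ = -Real.cos φ := by
        rw [← Finset.mul_sum, hIcc]
        simp [Complex.exp_ofReal_mul_I_re]

noncomputable def wgt (K : ℕ) (j : ℕ) : ℝ :=
  if j ≤ K + 1 then Real.sin (j * (Real.pi / (K+1))) else 0

lemma wgt_eq {K j : ℕ} (h : j ≤ K + 1) : wgt K j = Real.sin (j * (Real.pi / (K+1))) := if_pos h

lemma wgt_zero {K j : ℕ} (h : K + 1 ≤ j) : wgt K j = 0 := by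
  rcases eq_or_lt_of_le h with h' | h'
  · rw [wgt, if_pos h'.symm.le, ← h']
    have : ((K+1:ℕ):ℝ) * (Real.pi / (K+1)) = Real.pi := by
      have : ((K:ℝ)+1) ≠ 0 := by positivity
      push_cast
      field_simp
    rw [this, Real.sin_pi]
  · rw [wgt, if_neg (by omega)]

lemma abs_wgt_le_one (K j : ℕ) : |wgt K j| ≤ 1 := by
  rw [wgt]
  split
  · exact Real.abs_sin_le_one _
  · simp

noncomputable def psi (K d : ℕ) : ℝ := ∑ k ∈ Finset.Icc 1 K, wgt K k * wgt K (k+d)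

lemma psi_large {K d : ℕ} (h : K ≤ d) : psi K d = 0 := by
  apply Finset.sum_eq_zero
  intro k hk
  simp only [Finset.mem_Icc] at hk
  rw [wgt_zero (j := k + d) (by omega), mul_zero]

lemma abs_psi_le (K d : ℕ) : |psi K d| ≤ K := by
  calc |psi K d| ≤ ∑ k ∈ Finset.Icc 1 K, |wgt K k * wgt K (k+d)| := Finset.abs_sum_le_sum_abs _ _
    _ ≤ ∑ k ∈ Finset.Icc 1 K, 1 := by
        apply Finset.sum_le_sum
        intro k _
        rw [abs_mul]
        exact mul_le_one₀ (abs_wgt_le_one K k) (abs_nonneg _) (abs_wgt_le_one K (k+d))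
    _ = ((Finset.Icc 1 K).card : ℝ) := by simp
    _ ≤ K := by rw [Nat.card_Icc]; simp

lemma psi_zero_eq (K : ℕ) (hK : 1 ≤ K) : psi K 0 = ((K:ℝ)+1)/2 := by
  have h := sum_cos_arith K hK 0
  simp only [Real.cos_zero, add_zero] at h
  have : psi K 0 = ∑ k ∈ Finset.Icc 1 K, (1/2 - Real.cos (2 * k * (Real.pi/(K+1))) / 2) := by
    apply Finset.sum_congr rfl
    intro k hk
    simp only [Finset.mem_Icc] at hk
    rw [add_zero, wgt_eq (by omega)]
    have := Real.sin_sq_eq_half_sub ((k:ℝ) * (Real.pi/(K+1)))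
    rw [show 2 * ((k:ℝ) * (Real.pi/(K+1))) = 2 * (k:ℝ) * (Real.pi/(K+1)) by ring] at this
    nlinarith [this]
  have h2 : ∑ x ∈ Finset.Icc 1 K, Real.cos (2 * x * (Real.pi/(K+1))) / 2 = -1/2 := by
    rw [← Finset.sum_div, h]
  rw [this, Finset.sum_sub_distrib, h2, Finset.sum_const, Nat.card_Icc]
  simp
  ring

lemma psi_one_eq (K : ℕ) (hK : 1 ≤ K) :
    psi K 1 = ((K:ℝ)+1) * Real.cos (Real.pi/(K+1)) / 2 := by
  set A := Real.pi/(K+1) with hA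
  have h := sum_cos_arith K hK A
  have hterm : psi K 1 = ∑ k ∈ Finset.Icc 1 K, (Real.cos A / 2 - Real.cos (2 * k * A + A) / 2) := by
    apply Finset.sum_congr rfl
    intro k hk
    simp only [Finset.mem_Icc] at hk
    rw [wgt_eq (by omega : k ≤ K + 1), wgt_eq (by omega : k + 1 ≤ K + 1)]
    have h1 := Real.cos_sub (((k:ℝ)+1) * A) ((k:ℝ) * A)
    have h2 := Real.cos_add (((k:ℝ)+1) * A) ((k:ℝ) * A)
    rw [show ((k:ℝ)+1) * A - (k:ℝ) * A = A by ring] at h1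
    rw [show ((k:ℝ)+1) * A + (k:ℝ) * A = 2 * (k:ℝ) * A + A by ring] at h2
    have hc : ((k+1:ℕ):ℝ) = (k:ℝ) + 1 := by push_cast; ring
    rw [hc]
    nlinarith [h1, h2]
  rw [← hA] at h
  have h2 : ∑ x ∈ Finset.Icc 1 K, Real.cos (2 * x * A + A) / 2 = -Real.cos A/2 := by
    rw [← Finset.sum_div, h]
  rw [hterm, Finset.sum_sub_distrib, h2, Finset.sum_const, Nat.card_Icc]
  simp
  ring

lemma fiber_sum (K : ℕ) (m : ℤ) :
    ∑ p ∈ ((Finset.Icc 1 K ×ˢ Finset.Icc 1 K).filter (fun p : ℕ × ℕ => (p.1:ℤ) - p.2 = m)),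
      wgt K p.1 * wgt K p.2 = psi K m.natAbs := by
  set d := m.natAbs with hd
  have hpsi : psi K d = ∑ k ∈ (Finset.Icc 1 K).filter (fun k => k + d ≤ K),
      wgt K k * wgt K (k+d) := by
    rw [psi]
    apply (Finset.sum_subset (Finset.filter_subset _ _) _).symm
    intro k hk hk2
    simp only [Finset.mem_filter, Finset.mem_Icc] at hk hk2
    rw [wgt_zero (j := k + d) (by omega), mul_zero]
  rcases Int.natAbs_eq m with hm | hm
  · rw [hpsi]
    apply Finset.sum_nbij' (fun p : ℕ × ℕ => p.2) (fun k => (k + d, k))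
    · intro p hp
      simp only [Finset.mem_filter, Finset.mem_product, Finset.mem_Icc] at hp ⊢
      omega
    · intro k hk
      simp only [Finset.mem_filter, Finset.mem_product, Finset.mem_Icc] at hk ⊢
      omega
    · intro p hp
      simp only [Finset.mem_filter, Finset.mem_product, Finset.mem_Icc] at hp
      have : p.1 = p.2 + d := by omega
      rw [Prod.ext_iff]
      exact ⟨this.symm, rfl⟩
    · intro k hk
      rfl
    · intro p hp
      simp only [Finset.mem_filter, Finset.mem_product, Finset.mem_Icc] at hp
      have : p.1 = p.2 + d := by omega
      rw [this, mul_comm]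
  · rw [hpsi]
    apply Finset.sum_nbij' (fun p : ℕ × ℕ => p.1) (fun k => (k, k + d))
    · intro p hp
      simp only [Finset.mem_filter, Finset.mem_product, Finset.mem_Icc] at hp ⊢
      omega
    · intro k hk
      simp only [Finset.mem_filter, Finset.mem_product, Finset.mem_Icc] at hk ⊢
      omega
    · intro p hp
      simp only [Finset.mem_filter, Finset.mem_product, Finset.mem_Icc] at hp
      have : p.2 = p.1 + d := by omega
      rw [Prod.ext_iff]
      exact ⟨rfl, this.symm⟩
    · intro k hk
      rfl
    · intro p hp
      simp only [Finset.mem_filter, Finset.mem_product, Finset.mem_Icc] at hp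
      have : p.2 = p.1 + d := by omega
      rw [this]

lemma wgt_second_diff (K : ℕ) (hK : 1 ≤ K) (t : ℕ) (ht : 2 ≤ t) :
    |wgt K (t-1) - 2 * wgt K t + wgt K (t+1)|
      ≤ (Real.pi/(K+1))^2 + (if t = K+1 then Real.pi/(K+1) else 0) := by
  set A := Real.pi/(K+1) with hA
  have hKR : (0:ℝ) < (K:ℝ) + 1 := by positivity
  have hApos : 0 < A := by rw [hA]; positivity
  have hAle2 : A ≤ Real.pi / 2 := by
    rw [hA, div_le_div_iff₀ hKR two_pos]
    nlinarith [Real.pi_pos, (by exact_mod_cast hK : (1:ℝ) ≤ (K:ℝ))]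
  rcases lt_or_ge t (K+1) with h1 | h1
  · -- t ≤ K : smooth case
    rw [wgt_eq (by omega), wgt_eq (by omega), wgt_eq (by omega), if_neg (by omega)]
    have hc1 : ((t-1:ℕ):ℝ) = (t:ℝ) - 1 := by
      have : (1:ℕ) ≤ t := by omega
      push_cast [Nat.cast_sub this]
      ring
    have hc2 : ((t+1:ℕ):ℝ) = (t:ℝ) + 1 := by push_cast; ring
    rw [hc1, hc2]
    have hsum : Real.sin (((t:ℝ)-1) * A) + Real.sin (((t:ℝ)+1) * A)
        = 2 * Real.sin (t * A) * Real.cos A := by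
      rw [show ((t:ℝ)-1) * A = (t:ℝ)*A - A by ring, show ((t:ℝ)+1) * A = (t:ℝ)*A + A by ring,
        Real.sin_sub, Real.sin_add]
      ring
    have heq : Real.sin (((t:ℝ)-1) * A) - 2 * Real.sin (t*A) + Real.sin (((t:ℝ)+1) * A)
        = 2 * Real.sin ((t:ℝ)*A) * (Real.cos A - 1) := by
      nlinarith [hsum]
    rw [heq, add_zero, abs_mul, abs_mul]
    have h2 : |Real.cos A - 1| = 1 - Real.cos A := by
      rw [abs_sub_comm, abs_of_nonneg (by nlinarith [Real.cos_le_one A])]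
    have h3 : 1 - Real.cos A ≤ A^2/2 := by nlinarith [Real.one_sub_sq_div_two_le_cos (x := A)]
    have h4 : |Real.sin ((t:ℝ)*A)| ≤ 1 := Real.abs_sin_le_one _
    rw [h2]
    have : |(2:ℝ)| = 2 := by norm_num
    rw [this]
    nlinarith [abs_nonneg (Real.sin ((t:ℝ)*A)), Real.cos_le_one A,
      (by nlinarith [Real.cos_le_one A] : (0:ℝ) ≤ 1 - Real.cos A)]
  rcases eq_or_lt_of_le h1 with h2 | h2
  · -- t = K+1
    rw [if_pos h2.symm]
    have hw1 : wgt K t = 0 := wgt_zero (by omega)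
    have hw2 : wgt K (t+1) = 0 := wgt_zero (by omega)
    have hw0 : wgt K (t-1) = Real.sin A := by
      rw [wgt_eq (by omega)]
      have : ((t-1:ℕ):ℝ) * A = Real.pi - A := by
        have ht1 : ((t-1:ℕ):ℝ) = (K:ℝ) := by rw [← h2]; push_cast [Nat.cast_sub (by omega : 1 ≤ t)]; ring
        rw [ht1, hA]
        field_simp
        ring
      rw [this, Real.sin_pi_sub]
    rw [hw0, hw1, hw2]
    have hs : |Real.sin A| = Real.sin A := abs_of_nonneg (Real.sin_nonneg_of_nonneg_of_le_pi hApos.le (by linarith [Real.pi_pos]))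
    have : Real.sin A ≤ A := Real.sin_le hApos.le
    rw [show Real.sin A - 2*0 + 0 = Real.sin A by ring, hs]
    nlinarith [sq_nonneg A]
  · -- t ≥ K+2
    rw [wgt_zero (by omega), wgt_zero (by omega), wgt_zero (by omega), if_neg (by omega)]
    simp [hApos.le]

noncomputable def Cc (K : ℕ) (c : ℝ) (m : ℤ) : ℝ :=
  psi K (m-1).natAbs / 2 + psi K (m+1).natAbs / 2 - c * psi K m.natAbs

lemma Cc_neg (K : ℕ) (c : ℝ) (m : ℤ) : Cc K c (-m) = Cc K c m := by
  rw [Cc, Cc, show (-m-1).natAbs = (m+1).natAbs by omega,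
    show (-m+1).natAbs = (m-1).natAbs by omega, show (-m).natAbs = m.natAbs by omega]
  ring

lemma psi_second_diff (K : ℕ) (hK : 1 ≤ K) (d : ℕ) (hd : 1 ≤ d) :
    |psi K (d-1) - 2 * psi K d + psi K (d+1)|
      ≤ K * (Real.pi/(K+1))^2 + Real.pi/(K+1) := by
  set A := Real.pi/(K+1) with hA
  have hApos : 0 < A := by rw [hA]; positivity
  have hcomb : psi K (d-1) - 2 * psi K d + psi K (d+1)
      = ∑ k ∈ Finset.Icc 1 K, wgt K k * (wgt K (k+d-1) - 2 * wgt K (k+d) + wgt K (k+d+1)) := by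
    have hterm : ∀ k ∈ Finset.Icc 1 K,
        wgt K k * (wgt K (k+d-1) - 2 * wgt K (k+d) + wgt K (k+d+1))
        = wgt K k * wgt K (k+(d-1)) - 2*(wgt K k * wgt K (k+d)) + wgt K k * wgt K (k+(d+1)) := by
      intro k hk
      have e1 : k + (d-1) = k + d - 1 := by omega
      have e2 : k + (d+1) = k + d + 1 := by omega
      rw [e1, e2]
      ring
    rw [psi, psi, psi, Finset.sum_congr rfl hterm, Finset.sum_add_distrib,
      Finset.sum_sub_distrib, ← Finset.mul_sum]
  rw [hcomb]
  calc |∑ k ∈ Finset.Icc 1 K, wgt K k * (wgt K (k+d-1) - 2 * wgt K (k+d) + wgt K (k+d+1))|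
      ≤ ∑ k ∈ Finset.Icc 1 K, |wgt K k * (wgt K (k+d-1) - 2 * wgt K (k+d) + wgt K (k+d+1))| :=
        Finset.abs_sum_le_sum_abs _ _
    _ ≤ ∑ k ∈ Finset.Icc 1 K, (A^2 + (if k + d = K+1 then A else 0)) := by
        apply Finset.sum_le_sum
        intro k hk
        simp only [Finset.mem_Icc] at hk
        rw [abs_mul]
        have h1 := wgt_second_diff K hK (k+d) (by omega)
        rw [← hA] at h1
        have h2 := abs_wgt_le_one K k
        have h3 : (0:ℝ) ≤ A^2 + (if k + d = K+1 then A else 0) := by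
          have : (0:ℝ) ≤ (if k + d = K+1 then A else 0) := by split <;> simp [hApos.le]
          positivity
        calc |wgt K k| * |wgt K (k+d-1) - 2 * wgt K (k+d) + wgt K (k+d+1)|
            ≤ 1 * (A^2 + (if k + d = K+1 then A else 0)) := by
              apply mul_le_mul h2 h1 (abs_nonneg _) (by norm_num)
          _ = _ := by ring
    _ ≤ K * A^2 + A := by
        rw [Finset.sum_add_distrib, Finset.sum_const, Nat.card_Icc]
        have hind : ∑ k ∈ Finset.Icc 1 K, (if k + d = K+1 then A else 0) ≤ A := by
          rcases le_or_gt d K with h | h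
          · have : ∀ k ∈ Finset.Icc 1 K, (if k + d = K+1 then A else 0)
                = (if k = K+1-d then A else 0) := by
              intro k hk
              simp only [Finset.mem_Icc] at hk
              congr 1
              simp only [eq_iff_iff]
              omega
            rw [Finset.sum_congr rfl this, Finset.sum_ite_eq' (Finset.Icc 1 K) (K+1-d) (fun _ => A)]
            split <;> simp [hApos.le]
          · have : ∀ k ∈ Finset.Icc 1 K, (if k + d = K+1 then A else 0) = 0 := by
              intro k hk
              simp only [Finset.mem_Icc] at hk
              rw [if_neg (by omega)]
            rw [Finset.sum_congr rfl this]
            simp [hApos.le]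
        simp only [Nat.add_sub_cancel, nsmul_eq_mul]
        nlinarith [hind]

lemma Cc_bound (K : ℕ) (hK : 1 ≤ K) (H : ℝ) (hH2 : 2 ≤ H) (hKH : (K:ℝ) ≤ H)
    (hHK : H < (K:ℝ)+1) (d : ℕ) (hd : 1 ≤ d) :
    |Cc K (Real.cos (2*Real.pi/H)) (d:ℤ)| ≤ 27 / H := by
  set A := Real.pi/(K+1) with hA
  have hH0 : (0:ℝ) < H := by linarith
  have hApos : 0 < A := by rw [hA]; positivity
  have hAH : A ≤ Real.pi / H := by
    rw [hA]
    apply div_le_div_of_nonneg_left Real.pi_pos.le (by positivity) (by linarith)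
  have hKA : (K:ℝ) * A ≤ Real.pi := by
    rw [hA, ← mul_div_assoc, div_le_iff₀ (by positivity : (0:ℝ) < (K:ℝ)+1)]
    nlinarith [Real.pi_pos]
  set c0 := Real.cos (2*Real.pi/H) with hc0
  have hnat1 : ((d:ℤ) - 1).natAbs = d - 1 := by omega
  have hnat2 : ((d:ℤ) + 1).natAbs = d + 1 := by omega
  have hnat3 : ((d:ℤ)).natAbs = d := by omega
  have hsplit : Cc K c0 (d:ℤ)
      = (psi K (d-1) - 2*psi K d + psi K (d+1))/2 + (1 - c0) * psi K d := by
    rw [Cc, hnat1, hnat2, hnat3]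
    ring
  have h1 := psi_second_diff K hK d hd
  rw [← hA] at h1
  have h2 := abs_psi_le K d
  have hc1 : c0 ≤ 1 := Real.cos_le_one _
  have hc2 : 1 - c0 ≤ 2*Real.pi^2/H^2 := by
    have := Real.one_sub_sq_div_two_le_cos (x := 2*Real.pi/H)
    rw [← hc0] at this
    have he : (2*Real.pi/H)^2/2 = 2*Real.pi^2/H^2 := by
      field_simp
    nlinarith [this]
  have hpi := Real.pi_pos
  have h1' : |psi K (d-1) - 2*psi K d + psi K (d+1)| ≤ (Real.pi+1)*Real.pi/H := by
    have hKA2 : (K:ℝ) * A^2 ≤ Real.pi * A := by nlinarith [hApos]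
    have : (Real.pi + 1) * A ≤ (Real.pi+1)*(Real.pi/H) := by nlinarith [hAH]
    calc |psi K (d-1) - 2*psi K d + psi K (d+1)| ≤ (K:ℝ) * A^2 + A := h1
      _ ≤ Real.pi * A + A := by linarith
      _ = (Real.pi + 1) * A := by ring
      _ ≤ (Real.pi+1)*Real.pi/H := by rw [mul_div_assoc]; linarith
  have h4 : (1 - c0) * |psi K d| ≤ 2*Real.pi^2/H := by
    have hb1 : (0:ℝ) ≤ 1 - c0 := by linarith
    have hb2 : (1 - c0) * |psi K d| ≤ (2*Real.pi^2/H^2) * H := by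
      calc (1 - c0) * |psi K d| ≤ (2*Real.pi^2/H^2) * (K:ℝ) := by
            apply mul_le_mul hc2 h2 (abs_nonneg _) (by positivity)
        _ ≤ (2*Real.pi^2/H^2) * H := by
            apply mul_le_mul_of_nonneg_left hKH (by positivity)
    have he : (2*Real.pi^2/H^2) * H = 2*Real.pi^2/H := by
      field_simp
    linarith [hb2, he.le, he.ge]
  calc |Cc K c0 (d:ℤ)|
      ≤ |psi K (d-1) - 2*psi K d + psi K (d+1)|/2 + (1 - c0) * |psi K d| := by
        rw [hsplit]
        calc |(psi K (d-1) - 2*psi K d + psi K (d+1))/2 + (1 - c0) * psi K d|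
            ≤ |(psi K (d-1) - 2*psi K d + psi K (d+1))/2| + |(1 - c0) * psi K d| := abs_add_le _ _
          _ = |psi K (d-1) - 2*psi K d + psi K (d+1)|/2 + (1-c0) * |psi K d| := by
              rw [abs_div, abs_mul, abs_of_nonneg (by linarith : (0:ℝ) ≤ 1 - c0)]
              norm_num
    _ ≤ (Real.pi+1)*Real.pi/H/2 + 2*Real.pi^2/H := by linarith
    _ ≤ 27 / H := by
        have e1 : (Real.pi+1)*Real.pi/H/2 + 2*Real.pi^2/H
            = ((Real.pi+1)*Real.pi/2 + 2*Real.pi^2)/H := by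
          field_simp
        rw [e1]
        gcongr
        nlinarith [Real.pi_lt_d2]

lemma Cc_zero_lb (K : ℕ) (hK : 1 ≤ K) (H : ℝ) (hH2 : 2 ≤ H) (hKH : (K:ℝ) ≤ H)
    (hHK : H < (K:ℝ)+1) :
    1 / H ≤ Cc K (Real.cos (2*Real.pi/H)) 0 := by
  set A := Real.pi/(K+1) with hA
  have hH0 : (0:ℝ) < H := by linarith
  have hpi := Real.pi_pos
  have hApos : 0 < A := by rw [hA]; positivity
  have hAH : A ≤ Real.pi / H := by
    rw [hA]
    apply div_le_div_of_nonneg_left Real.pi_pos.le (by positivity) (by linarith)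
  have hCc : Cc K (Real.cos (2*Real.pi/H)) 0
      = ((K:ℝ)+1)/2 * (Real.cos A - Real.cos (2*Real.pi/H)) := by
    rw [Cc]
    norm_num
    rw [psi_one_eq K hK, psi_zero_eq K hK, ← hA]
    ring
  have hcosA : Real.cos (Real.pi/H) ≤ Real.cos A := by
    apply Real.cos_le_cos_of_nonneg_of_le_pi hApos.le
    · calc Real.pi / H ≤ Real.pi / 1 := by
            apply div_le_div_of_nonneg_left hpi.le one_pos (by linarith)
      _ = Real.pi := by norm_num
    · exact hAH
  have hlow : 1 - Real.pi^2/(2*H^2) ≤ Real.cos (Real.pi/H) := by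
    have := Real.one_sub_sq_div_two_le_cos (x := Real.pi/H)
    have he : (Real.pi/H)^2/2 = Real.pi^2/(2*H^2) := by field_simp
    linarith [this, he.le, he.ge]
  have hupp : Real.cos (2*Real.pi/H) ≤ 1 - 8/H^2 := by
    have habs : |2*Real.pi/H| ≤ Real.pi := by
      rw [abs_of_nonneg (by positivity)]
      rw [div_le_iff₀ hH0]
      nlinarith
    have := Real.cos_le_one_sub_mul_cos_sq habs
    have he : 2 / Real.pi ^ 2 * (2*Real.pi/H) ^ 2 = 8/H^2 := by
      field_simp
      ring
    linarith [this, he.le, he.ge]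
  have hgap : 3/H^2 ≤ Real.cos A - Real.cos (2*Real.pi/H) := by
    have hpi2 : Real.pi^2 ≤ 10 := by nlinarith [Real.pi_lt_d2]
    have : Real.pi^2/(2*H^2) ≤ 5/H^2 := by
      rw [div_le_div_iff₀ (by positivity) (by positivity)]
      nlinarith
    have h8 : 8/H^2 - 5/H^2 = 3/H^2 := by ring
    linarith [hcosA, hlow, hupp]
  have hHK2 : H/2 ≤ ((K:ℝ)+1)/2 := by linarith
  calc 1/H = (H/2) * (2/H^2) := by field_simp
    _ ≤ ((K:ℝ)+1)/2 * (3/H^2) := by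
        apply mul_le_mul hHK2 (by gcongr <;> norm_num) (by positivity) (by positivity)
    _ ≤ ((K:ℝ)+1)/2 * (Real.cos A - Real.cos (2*Real.pi/H)) := by
        apply mul_le_mul_of_nonneg_left hgap (by positivity)
    _ = Cc K (Real.cos (2*Real.pi/H)) 0 := hCc.symm

lemma e_cos (θ : ℝ) : e θ + e (-θ) = 2 * Real.cos (2*Real.pi*θ) := by
  rw [e, e]
  have h1 : 2 * (Real.pi:ℂ) * Complex.I * (θ:ℂ) = ((2*Real.pi*θ : ℝ):ℂ) * Complex.I := by
    push_cast; ring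
  have h2 : 2 * (Real.pi:ℂ) * Complex.I * ((-θ:ℝ):ℂ) = ((-(2*Real.pi*θ) : ℝ):ℂ) * Complex.I := by
    push_cast; ring
  rw [h1, h2, Complex.exp_mul_I, Complex.exp_mul_I]
  rw [← Complex.ofReal_cos, ← Complex.ofReal_sin, ← Complex.ofReal_cos, ← Complex.ofReal_sin]
  rw [Real.cos_neg, Real.sin_neg]
  push_cast
  ring

lemma cos_le_of_nint {H x : ℝ} (hH2 : 2 ≤ H) (hx : H⁻¹ ≤ nint x) :
    Real.cos (2*Real.pi*x) ≤ Real.cos (2*Real.pi/H) := by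
  have hH0 : (0:ℝ) < H := by linarith
  have hpi := Real.pi_pos
  set r := x - round x with hr
  have h1 : Real.cos (2*Real.pi*x) = Real.cos (2*Real.pi*r) := by
    rw [show 2*Real.pi*x = 2*Real.pi*r + (round x) * (2*Real.pi) by rw [hr]; push_cast; ring]
    exact Real.cos_add_int_mul_two_pi _ _
  have h2 : Real.cos (2*Real.pi*r) = Real.cos (2*Real.pi*|r|) := by
    rcases abs_cases r with ⟨h, _⟩ | ⟨h, _⟩
    · rw [h]
    · rw [h, show 2*Real.pi*(-r) = -(2*Real.pi*r) by ring, Real.cos_neg]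
  have hnint : nint x = |r| := rfl
  have habs : |r| ≤ 1/2 := abs_sub_round x
  have hlb : H⁻¹ ≤ |r| := hx
  rw [h1, h2]
  apply Real.cos_le_cos_of_nonneg_of_le_pi (by positivity)
  · nlinarith [habs]
  · rw [div_eq_mul_inv]
    nlinarith [hlb]

lemma main_case (N : ℕ) (x : Fin N → ℝ) (H : ℝ) (hH2 : 2 ≤ H)
    (hx : ∀ n, H⁻¹ ≤ nint (x n)) :
    (1/54 : ℝ) * N ≤ ∑ h ∈ Finset.Icc 1 ⌊H⌋₊, ‖∑ n : Fin N, e ((h:ℝ) * x n)‖ := by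
  have hH0 : (0:ℝ) < H := by linarith
  set K := ⌊H⌋₊ with hKdef
  have hK1 : 1 ≤ K := Nat.le_floor (by exact_mod_cast (by linarith : (1:ℝ) ≤ H))
  have hKH : (K:ℝ) ≤ H := Nat.floor_le hH0.le
  have hHK : H < (K:ℝ)+1 := by exact_mod_cast Nat.lt_floor_add_one H
  set c0 : ℝ := Real.cos (2*Real.pi/H) with hc0
  set S : ℤ → ℂ := fun m => ∑ n : Fin N, e ((m:ℝ) * x n) with hS
  set D := (Finset.Icc 1 K) ×ˢ (Finset.Icc 1 K) with hD
  set M := Finset.Icc (-(K:ℤ)) (K:ℤ) with hM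
  -- fiberwise regrouping for each shift t
  have htZ : ∀ t : ℤ, t.natAbs ≤ 1 →
      ∑ p ∈ D, ((wgt K p.1 * wgt K p.2 : ℝ):ℂ) * S ((p.1:ℤ) - (p.2:ℤ) + t)
      = ∑ m ∈ M, ((psi K ((m - t).natAbs) : ℝ):ℂ) * S m := by
    intro t ht
    have hmaps : ∀ p ∈ D, (p.1:ℤ) - (p.2:ℤ) + t ∈ M := by
      intro p hp
      simp only [hD, Finset.mem_product, Finset.mem_Icc] at hp
      simp only [hM, Finset.mem_Icc]
      omega
    rw [← Finset.sum_fiberwise_of_maps_to hmaps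
      (fun p => ((wgt K p.1 * wgt K p.2 : ℝ):ℂ) * S ((p.1:ℤ) - (p.2:ℤ) + t))]
    apply Finset.sum_congr rfl
    intro m hm
    have hstep : ∀ p ∈ D.filter (fun p : ℕ × ℕ => (p.1:ℤ) - (p.2:ℤ) + t = m),
        ((wgt K p.1 * wgt K p.2 : ℝ):ℂ) * S ((p.1:ℤ) - (p.2:ℤ) + t)
        = ((wgt K p.1 * wgt K p.2 : ℝ):ℂ) * S m := by
      intro p hp
      simp only [Finset.mem_filter] at hp
      rw [hp.2]
    rw [Finset.sum_congr rfl hstep, ← Finset.sum_mul, ← Complex.ofReal_sum]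
    congr 2
    have hfil : D.filter (fun p : ℕ × ℕ => (p.1:ℤ) - (p.2:ℤ) + t = m)
        = D.filter (fun p : ℕ × ℕ => (p.1:ℤ) - (p.2:ℤ) = m - t) := by
      apply Finset.filter_congr
      intro p _
      constructor
      · intro h; omega
      · intro h; omega
    rw [hfil, hD]
    exact fiber_sum K (m - t)
  -- the key quantity
  set Z : ℂ := ∑ p ∈ D, ((wgt K p.1 * wgt K p.2 : ℝ):ℂ) *
      ((1/2 : ℂ) * S ((p.1:ℤ) - (p.2:ℤ) + 1) + (1/2 : ℂ) * S ((p.1:ℤ) - (p.2:ℤ) - 1)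
        - ((c0:ℝ):ℂ) * S ((p.1:ℤ) - (p.2:ℤ))) with hZ
  have hZfib : Z = ∑ m ∈ M, ((Cc K c0 m : ℝ):ℂ) * S m := by
    have hsplit : Z = (1/2 : ℂ) * (∑ p ∈ D, ((wgt K p.1 * wgt K p.2 : ℝ):ℂ) * S ((p.1:ℤ) - (p.2:ℤ) + 1))
        + (1/2 : ℂ) * (∑ p ∈ D, ((wgt K p.1 * wgt K p.2 : ℝ):ℂ) * S ((p.1:ℤ) - (p.2:ℤ) + (-1)))
        - ((c0:ℝ):ℂ) * (∑ p ∈ D, ((wgt K p.1 * wgt K p.2 : ℝ):ℂ) * S ((p.1:ℤ) - (p.2:ℤ) + 0)) := by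
      rw [hZ, Finset.mul_sum, Finset.mul_sum, Finset.mul_sum, ← Finset.sum_add_distrib,
        ← Finset.sum_sub_distrib]
      apply Finset.sum_congr rfl
      intro p _
      rw [show (p.1:ℤ) - (p.2:ℤ) + (-1) = (p.1:ℤ) - (p.2:ℤ) - 1 by ring,
        show (p.1:ℤ) - (p.2:ℤ) + 0 = (p.1:ℤ) - (p.2:ℤ) by ring]
      ring
    rw [hsplit, htZ 1 (by norm_num), htZ (-1) (by norm_num), htZ 0 (by norm_num),
      Finset.mul_sum, Finset.mul_sum, Finset.mul_sum, ← Finset.sum_add_distrib,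
      ← Finset.sum_sub_distrib]
    apply Finset.sum_congr rfl
    intro m _
    rw [show m - (-1) = m + 1 by ring, show m - 0 = m by ring, Cc]
    push_cast
    ring
  -- pointwise expansion: Z as a sum over n
  set P : ℝ → ℂ := fun θ => ∑ j ∈ Finset.Icc 1 K, ((wgt K j : ℝ):ℂ) * e (j * θ) with hP
  have hZn : Z = ∑ n : Fin N, ((Real.cos (2*Real.pi*(x n)) - c0 : ℝ):ℂ)
      * (P (x n) * (starRingEnd ℂ) (P (x n))) := by
    have hstep1 : Z = ∑ p ∈ D, ∑ n : Fin N, ((wgt K p.1 * wgt K p.2 : ℝ):ℂ) *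
        ((1/2 : ℂ) * e ((((p.1:ℤ) - (p.2:ℤ) + 1 : ℤ):ℝ) * x n)
          + (1/2 : ℂ) * e ((((p.1:ℤ) - (p.2:ℤ) - 1 : ℤ):ℝ) * x n)
          - ((c0:ℝ):ℂ) * e ((((p.1:ℤ) - (p.2:ℤ) : ℤ):ℝ) * x n)) := by
      rw [hZ]
      apply Finset.sum_congr rfl
      intro p _
      rw [hS]
      simp only
      rw [Finset.mul_sum, Finset.mul_sum, Finset.mul_sum, ← Finset.sum_add_distrib,
        ← Finset.sum_sub_distrib, Finset.mul_sum]
    rw [hstep1, Finset.sum_comm]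
    apply Finset.sum_congr rfl
    intro n _
    have hper : ∀ p ∈ D, ((wgt K p.1 * wgt K p.2 : ℝ):ℂ) *
        ((1/2 : ℂ) * e ((((p.1:ℤ) - (p.2:ℤ) + 1 : ℤ):ℝ) * x n)
          + (1/2 : ℂ) * e ((((p.1:ℤ) - (p.2:ℤ) - 1 : ℤ):ℝ) * x n)
          - ((c0:ℝ):ℂ) * e ((((p.1:ℤ) - (p.2:ℤ) : ℤ):ℝ) * x n))
        = ((Real.cos (2*Real.pi*(x n)) - c0 : ℝ):ℂ)
          * (((wgt K p.1 * wgt K p.2 : ℝ):ℂ) * e ((((p.1:ℤ) - (p.2:ℤ) : ℤ):ℝ) * x n)) := by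
      intro p _
      have he1 : e ((((p.1:ℤ) - (p.2:ℤ) + 1 : ℤ):ℝ) * x n)
          = e ((((p.1:ℤ) - (p.2:ℤ) : ℤ):ℝ) * x n) * e (x n) := by
        rw [← e_add]
        congr 1
        push_cast
        ring
      have he2 : e ((((p.1:ℤ) - (p.2:ℤ) - 1 : ℤ):ℝ) * x n)
          = e ((((p.1:ℤ) - (p.2:ℤ) : ℤ):ℝ) * x n) * e (-(x n)) := by
        rw [← e_add]
        congr 1
        push_cast
        ring
      have hec := e_cos (x n)
      rw [he1, he2]
      push_cast [Complex.ofReal_cos] at hec ⊢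
      linear_combination ((wgt K p.1 : ℂ) * (wgt K p.2 : ℂ)
        * e (((p.1:ℝ) - (p.2:ℝ)) * x n) / 2) * hec
    rw [Finset.sum_congr rfl hper, ← Finset.mul_sum]
    congr 1
    -- product of sums
    have hconj : (starRingEnd ℂ) (P (x n)) = ∑ k ∈ Finset.Icc 1 K, ((wgt K k : ℝ):ℂ) * e (-(k * x n)) := by
      rw [hP]
      simp only
      rw [map_sum]
      apply Finset.sum_congr rfl
      intro k _
      rw [map_mul, Complex.conj_ofReal, conj_e]
    rw [hconj, hP]
    simp only
    rw [Finset.sum_mul_sum]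
    rw [hD, Finset.sum_product]
    apply Finset.sum_congr rfl
    intro j _
    apply Finset.sum_congr rfl
    intro k _
    have he : e ((j:ℝ) * x n) * e (-((k:ℝ) * x n)) = e ((((j:ℤ) - (k:ℤ) : ℤ):ℝ) * x n) := by
      rw [← e_add]
      congr 1
      push_cast
      ring
    rw [← he]
    push_cast
    ring
  have hZre : Z.re ≤ 0 := by
    rw [hZn, Complex.re_sum]
    apply Finset.sum_nonpos
    intro n _
    rw [Complex.mul_conj, ← Complex.ofReal_mul, Complex.ofReal_re]
    apply mul_nonpos_of_nonpos_of_nonneg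
    · rw [sub_nonpos, hc0]
      exact cos_le_of_nint hH2 (hx n)
    · exact Complex.normSq_nonneg _
  have h0M : (0:ℤ) ∈ M := by
    simp only [hM, Finset.mem_Icc]
    omega
  have hS0 : S 0 = (N:ℂ) := by
    rw [hS]
    simp [e_zero]
  have hSneg : ∀ m : ℤ, S (-m) = (starRingEnd ℂ) (S m) := by
    intro m
    rw [hS]
    simp only
    rw [map_sum]
    apply Finset.sum_congr rfl
    intro n _
    rw [show ((-m : ℤ):ℝ) * x n = -((m:ℝ) * x n) by push_cast; ring, ← conj_e]
  have hre : Cc K c0 0 * (N:ℝ) ≤ ∑ m ∈ M.erase 0, |Cc K c0 m| * ‖S m‖ := by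
    have hsplit0 : ((Cc K c0 0 : ℝ):ℂ) * S 0 = Z - ∑ m ∈ M.erase 0, ((Cc K c0 m : ℝ):ℂ) * S m := by
      rw [hZfib, ← Finset.add_sum_erase M _ h0M]
      ring
    have h1 : (((Cc K c0 0 : ℝ):ℂ) * S 0).re = Cc K c0 0 * (N:ℝ) := by
      rw [hS0, ← Complex.ofReal_natCast, ← Complex.ofReal_mul, Complex.ofReal_re]
    have h2 : (∑ m ∈ M.erase 0, ((Cc K c0 m : ℝ):ℂ) * S m).re
        ≥ -∑ m ∈ M.erase 0, |Cc K c0 m| * ‖S m‖ := by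
      rw [Complex.re_sum, ge_iff_le, neg_le, ← Finset.sum_neg_distrib]
      apply Finset.sum_le_sum
      intro m _
      have := Complex.abs_re_le_norm (((Cc K c0 m : ℝ):ℂ) * S m)
      have habs : ‖((Cc K c0 m : ℝ):ℂ) * S m‖ = |Cc K c0 m| * ‖S m‖ := by
        rw [norm_mul, Complex.norm_real, Real.norm_eq_abs]
      rw [habs] at this
      cases abs_cases ((((Cc K c0 m : ℝ):ℂ) * S m).re) with
      | inl h => linarith [h.1.le]
      | inr h => linarith [h.1.le]
    have h3 := congrArg Complex.re hsplit0
    rw [h1, Complex.sub_re] at h3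
    linarith [hZre, h2]
  have hfib2 : ∑ m ∈ M.erase 0, |Cc K c0 m| * ‖S m‖
      = ∑ d ∈ Finset.Icc 1 K, 2 * (|Cc K c0 (d:ℤ)| * ‖S (d:ℤ)‖) := by
    have hmaps2 : ∀ m ∈ M.erase 0, m.natAbs ∈ Finset.Icc 1 K := by
      intro m hm
      simp only [hM, Finset.mem_erase, Finset.mem_Icc] at hm
      simp only [Finset.mem_Icc]
      omega
    rw [← Finset.sum_fiberwise_of_maps_to hmaps2 (fun m => |Cc K c0 m| * ‖S m‖)]
    apply Finset.sum_congr rfl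
    intro d hd
    simp only [Finset.mem_Icc] at hd
    have hfset : (M.erase 0).filter (fun m => m.natAbs = d) = {(d:ℤ), -(d:ℤ)} := by
      ext m
      simp only [hM, Finset.mem_filter, Finset.mem_erase, Finset.mem_Icc, Finset.mem_insert,
        Finset.mem_singleton]
      omega
    rw [hfset, Finset.sum_pair (by omega : (d:ℤ) ≠ -(d:ℤ))]
    rw [hSneg d, Cc_neg, Complex.norm_conj]
    ring
  have hCb : ∀ d ∈ Finset.Icc 1 K, |Cc K c0 (d:ℤ)| ≤ 27/H := by
    intro d hd
    simp only [Finset.mem_Icc] at hd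
    rw [hc0]
    exact Cc_bound K hK1 H hH2 hKH hHK d hd.1
  have hC0 : 1/H ≤ Cc K c0 0 := by
    rw [hc0]
    exact Cc_zero_lb K hK1 H hH2 hKH hHK
  set T := ∑ d ∈ Finset.Icc 1 K, ‖S (d:ℤ)‖ with hT
  have hTnonneg : 0 ≤ T := by
    rw [hT]
    apply Finset.sum_nonneg
    intro d _
    exact norm_nonneg _
  have hchain : (1/H) * N ≤ (54/H) * T := by
    calc (1/H) * N ≤ Cc K c0 0 * N := by
          apply mul_le_mul_of_nonneg_right hC0 (Nat.cast_nonneg N)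
      _ ≤ ∑ m ∈ M.erase 0, |Cc K c0 m| * ‖S m‖ := hre
      _ = ∑ d ∈ Finset.Icc 1 K, 2 * (|Cc K c0 (d:ℤ)| * ‖S (d:ℤ)‖) := hfib2
      _ ≤ ∑ d ∈ Finset.Icc 1 K, (54/H) * ‖S (d:ℤ)‖ := by
          apply Finset.sum_le_sum
          intro d hd
          have h1 := hCb d hd
          have h2 : (0:ℝ) ≤ ‖S (d:ℤ)‖ := norm_nonneg _
          have h3 : (0:ℝ) ≤ |Cc K c0 (d:ℤ)| := abs_nonneg _
          calc 2 * (|Cc K c0 (d:ℤ)| * ‖S (d:ℤ)‖)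
              ≤ 2 * ((27/H) * ‖S (d:ℤ)‖) := by
                nlinarith [mul_le_mul_of_nonneg_right h1 h2]
            _ = (54/H) * ‖S (d:ℤ)‖ := by ring
      _ = (54/H) * T := by rw [hT, Finset.mul_sum]
  have hNT : (N:ℝ) ≤ 54 * T := by
    have := mul_le_mul_of_nonneg_left hchain hH0.le
    have e1 : H * ((1/H) * N) = (N:ℝ) := by field_simp
    have e2 : H * ((54/H) * T) = 54 * T := by field_simp
    linarith [this, e1.le, e1.ge, e2.le, e2.ge]
  have hfinal : ∑ h ∈ Finset.Icc 1 K, ‖∑ n : Fin N, e ((h:ℝ) * x n)‖ = T := by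
    rw [hT]
    apply Finset.sum_congr rfl
    intro d _
    congr 1
  rw [hfinal]
  linarith
theorem statement13 :
    ∃ c : ℝ, 0 < c ∧ ∀ (N : ℕ) (x : Fin N → ℝ) (H : ℝ), 1 ≤ H →
      (∀ n : Fin N, H⁻¹ ≤ nint (x n)) →
      c * N ≤ ∑ h ∈ Finset.Icc 1 ⌊H⌋₊, ‖∑ n : Fin N, e ((h : ℝ) * x n)‖ := by
  refine ⟨1/54, by norm_num, ?_⟩
  intro N x H hH hx
  rcases lt_or_ge H 2 with h2 | h2
  · have hN : N = 0 := by
      by_contra hN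
      have hpos : 0 < N := Nat.pos_of_ne_zero hN
      have hxx := hx ⟨0, hpos⟩
      have h1 : nint (x ⟨0, hpos⟩) ≤ 1/2 := abs_sub_round _
      have hH0 : (0:ℝ) < H := by linarith
      have h3 : (1:ℝ)/2 < H⁻¹ := by
        rw [inv_eq_one_div, lt_div_iff₀ hH0]
        linarith
      linarith
    subst hN
    simp
  · exact main_case N x H h2 hx
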